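/- Let V be a finite set of points in the Euclidean plane ℝ², let T and T' be two minimum spanning trees of V, and let u, v ∈ V be distinct. Then the maximum edge length on the unique path in T from u to v equals the maximum edge length on the unique path in T' from u to v. -/

import Mathlib

open scoped BigOperators

noncomputable section

/-- The Euclidean plane. -/
abbrev Pt : Type := EuclideanSpace ℝ (Fin 2)

/-- The length of an edge (an unordered pair of points): the Euclidean
distance between its endpoints. -/
def edgeLen : Sym2 Pt → ℝ :=
  Sym2.lift ⟨fun a b => dist a b, fun a b => dist_comm a b⟩

/-- The total length of a graph on the plane: the sum of the Euclidean
lengths of its edges. -/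
def glength (G : SimpleGraph Pt) : ℝ := ∑ᶠ e ∈ G.edgeSet, edgeLen e

/-- `G` is a spanning tree of the point set `V`: all its edges join points of
`V`, it is acyclic, and all points of `V` are pairwise connected in `G`. -/
def IsSpanningTreeOn (V : Set Pt) (G : SimpleGraph Pt) : Prop :=
  (∀ ⦃x y : Pt⦄, G.Adj x y → x ∈ V ∧ y ∈ V) ∧ G.IsAcyclic ∧
    ∀ x ∈ V, ∀ y ∈ V, G.Reachable x y

/-- `G` is a minimum spanning tree of the point set `V`. -/
def IsMSTOn (V : Set Pt) (G : SimpleGraph Pt) : Prop :=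
  IsSpanningTreeOn V G ∧
    ∀ H : SimpleGraph Pt, IsSpanningTreeOn V H → glength G ≤ glength H

open SimpleGraph

@[simp] lemma edgeLen_mk (a b : Pt) : edgeLen s(a, b) = dist a b := rfl

lemma glength_eq_sum (G : SimpleGraph Pt) (E : Finset (Sym2 Pt)) (h : G.edgeSet = ↑E) :
    glength G = ∑ e ∈ E, edgeLen e := by
  rw [glength, h, finsum_mem_coe_finset]

lemma edgeSet_finite {V : Finset Pt} {G : SimpleGraph Pt}
    (h : ∀ ⦃x y : Pt⦄, G.Adj x y → x ∈ (V : Set Pt) ∧ y ∈ (V : Set Pt)) :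
    G.edgeSet.Finite := by
  refine Set.Finite.subset ((V.finite_toSet.prod V.finite_toSet).image
    fun p => s(p.1, p.2)) ?_
  intro e he
  induction e using Sym2.ind with
  | _ x y =>
    rw [mem_edgeSet] at he
    exact ⟨(x, y), ⟨(h he).1, (h he).2⟩, rfl⟩

/-- If `w` is reachable to `a` in `G`, then after deleting the edge `s(a,b)`,
`w` is reachable to `a` or to `b`. -/
lemma reach_or {G : SimpleGraph Pt} (a b : Pt) {w z : Pt} (p : G.Walk w z)
    (hz : (G \ fromEdgeSet {s(a, b)}).Reachable z a ∨
      (G \ fromEdgeSet {s(a, b)}).Reachable z b) :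
    (G \ fromEdgeSet {s(a, b)}).Reachable w a ∨ (G \ fromEdgeSet {s(a, b)}).Reachable w b := by
  revert hz
  induction p with
  | nil => exact fun hz => hz
  | @cons u c _ h' p ih =>
    intro hz
    by_cases he : s(u, c) = s(a, b)
    · rw [Sym2.eq_iff] at he
      rcases he with ⟨rfl, rfl⟩ | ⟨rfl, rfl⟩
      · exact Or.inl (Reachable.refl _)
      · exact Or.inr (Reachable.refl _)
    · have hadj : (G \ fromEdgeSet {s(a, b)}).Adj u c := by
        rw [sdiff_adj, fromEdgeSet_adj]
        exact ⟨h', fun hc => he hc.1⟩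
      rcases ih hz with hc | hc
      · exact Or.inl (hadj.reachable.trans hc)
      · exact Or.inr (hadj.reachable.trans hc)

/-- Along a trail, each dart splits the walk: the start is reachable to the dart's
first vertex and the dart's second vertex to the end, even after deleting the dart's edge. -/
lemma walk_dart_sides {G : SimpleGraph Pt} {u v : Pt} (p : G.Walk u v) (hp : p.IsTrail) :
    ∀ d ∈ p.darts, (G \ fromEdgeSet {d.edge}).Reachable u d.toProd.1 ∧
      (G \ fromEdgeSet {d.edge}).Reachable d.toProd.2 v := by
  revert hp
  induction p with
  | nil => intro _ d hd; simp at hd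
  | @cons u c _ h' p ih =>
    intro hp d hd
    rw [Walk.isTrail_cons] at hp
    rw [Walk.darts_cons, List.mem_cons] at hd
    rcases hd with rfl | hd
    · refine ⟨Reachable.refl _, ?_⟩
      refine ⟨p.transfer _ fun e he => ?_⟩
      rw [edgeSet_sdiff, edgeSet_fromEdgeSet, edgeSet_sdiff_sdiff_isDiag, Set.mem_diff,
        Set.mem_singleton_iff]
      refine ⟨p.edges_subset_edgeSet he, fun h => hp.2 ?_⟩
      rw [show s(u, c) = e from h.symm]
      exact he
    · obtain ⟨h1, h2⟩ := ih hp.1 d hd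
      refine ⟨?_, h2⟩
      have hmem : d.edge ∈ p.edges := List.mem_map_of_mem hd
      have hne : s(u, c) ≠ d.edge := fun h => hp.2 (h ▸ hmem)
      have hadj : (G \ fromEdgeSet {d.edge}).Adj u c := by
        rw [sdiff_adj, fromEdgeSet_adj]
        exact ⟨h', fun hc => hne hc.1⟩
      exact hadj.reachable.trans h1

/-- A walk from inside a set `S` to outside it crosses the boundary at some edge. -/
lemma walk_cross {G : SimpleGraph Pt} {u v : Pt} (q : G.Walk u v) (S : Set Pt)
    (hu : u ∈ S) (hv : v ∉ S) :
    ∃ x y : Pt, s(x, y) ∈ q.edges ∧ G.Adj x y ∧ x ∈ S ∧ y ∉ S := by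
  revert hu hv
  induction q with
  | nil => intro hu hv; exact absurd hu hv
  | @cons w c _ h' q ih =>
    intro hu hv
    by_cases hc : c ∈ S
    · obtain ⟨x, y, hmem, rest⟩ := ih hc hv
      exact ⟨x, y, List.mem_cons_of_mem _ hmem, rest⟩
    · refine ⟨w, c, ?_, h', hu, hc⟩
      rw [Walk.edges_cons]
      exact List.mem_cons_self

/-- Adding an edge between two non-reachable vertices of an acyclic graph keeps it acyclic. -/
lemma acyclic_sup_edge {G : SimpleGraph Pt} (hG : G.IsAcyclic) {x y : Pt}
    (hr : ¬G.Reachable x y) (hne : x ≠ y) : (G ⊔ fromEdgeSet {s(x, y)}).IsAcyclic := by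
  intro w c hc
  by_cases he : s(x, y) ∈ c.edges
  · have h2 := ((adj_and_reachable_delete_edges_iff_exists_cycle
      (G := G ⊔ fromEdgeSet {s(x, y)})).mpr ⟨w, c, hc, he⟩).2
    apply hr
    refine h2.mono fun p q hpq => ?_
    rw [deleteEdges, sdiff_adj, sup_adj] at hpq
    rcases hpq.1 with h | h
    · exact h
    · exact absurd h hpq.2
  · have hsub : ∀ e ∈ c.edges, e ∈ G.edgeSet := by
      intro e hce
      have h1 := c.edges_subset_edgeSet hce
      rw [edgeSet_sup, edgeSet_fromEdgeSet] at h1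
      rcases h1 with h | h
      · exact h
      · exact absurd (Set.mem_singleton_iff.mp h.1 ▸ hce) he
    exact hG (c.transfer G hsub) (hc.transfer hsub)

/-- The exchange property: an edge of an MST is no longer than any edge crossing
the cut it defines. -/
lemma mst_exchange (V : Finset Pt) (T : SimpleGraph Pt) (hT : IsMSTOn ↑V T)
    {a b x y : Pt} (hab : T.Adj a b) (hx : x ∈ V) (hy : y ∈ V)
    (hxa : (T \ fromEdgeSet {s(a, b)}).Reachable x a)
    (hyb : (T \ fromEdgeSet {s(a, b)}).Reachable y b) :
    dist a b ≤ dist x y := by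
  classical
  by_contra hlt
  push_neg at hlt
  obtain ⟨⟨hedges, hacyc, hconn⟩, hmin⟩ := hT
  set G0 := T \ fromEdgeSet {s(a, b)} with hG0
  have hG0le : G0 ≤ T := sdiff_le
  have hbridge : ¬G0.Reachable a b :=
    (isBridge_iff.mp (isAcyclic_iff_forall_adj_isBridge.mp hacyc hab))
  have hnxy : ¬G0.Reachable x y := fun h => hbridge ((hxa.symm.trans h).trans hyb)
  have hne : x ≠ y := by rintro rfl; exact hnxy (Reachable.refl _)
  have ha : a ∈ V := (hedges hab).1
  have hG0acyc : G0.IsAcyclic := by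
    intro w c hc
    have hsub : ∀ e ∈ c.edges, e ∈ T.edgeSet := by
      intro e hce
      have h1 := c.edges_subset_edgeSet hce
      rw [hG0, edgeSet_sdiff] at h1
      exact h1.1
    exact hacyc (c.transfer T hsub) (hc.transfer hsub)
  set H := G0 ⊔ fromEdgeSet {s(x, y)} with hH
  have hHadjxy : H.Adj x y := by
    rw [hH, sup_adj, fromEdgeSet_adj]
    exact Or.inr ⟨rfl, hne⟩
  have hHacyc : H.IsAcyclic := acyclic_sup_edge hG0acyc hnxy hne
  have habH : H.Reachable a b :=
    ((hxa.mono le_sup_left).symm.trans hHadjxy.reachable).trans (hyb.mono le_sup_left)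
  have hreach : ∀ w ∈ (V : Set Pt), H.Reachable w a := by
    intro w hw
    obtain ⟨pw⟩ := hconn w hw a ha
    rcases reach_or a b pw (Or.inl (Reachable.refl _)) with h | h
    · exact h.mono le_sup_left
    · exact (h.mono le_sup_left).trans habH.symm
  have hHst : IsSpanningTreeOn ↑V H := by
    refine ⟨?_, hHacyc, fun w hw z hz => (hreach w hw).trans (hreach z hz).symm⟩
    intro p q hpq
    rw [hH, sup_adj, fromEdgeSet_adj] at hpq
    rcases hpq with h | h
    · exact hedges (hG0le h)
    · have h1 := Set.mem_singleton_iff.mp h.1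
      rw [Sym2.eq_iff] at h1
      rcases h1 with ⟨rfl, rfl⟩ | ⟨rfl, rfl⟩
      · exact ⟨hx, hy⟩
      · exact ⟨hy, hx⟩
  have hlen := hmin H hHst
  have hfinT : T.edgeSet.Finite := edgeSet_finite hedges
  set ET := hfinT.toFinset with hET
  have hTE : T.edgeSet = ↑ET := hfinT.coe_toFinset.symm
  have hfxy : s(x, y) ∉ T.edgeSet := by
    intro hmem
    by_cases hexy : s(x, y) = s(a, b)
    · rw [Sym2.eq_iff] at hexy
      rcases hexy with ⟨rfl, rfl⟩ | ⟨rfl, rfl⟩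
      · exact lt_irrefl _ hlt
      · rw [dist_comm x y] at hlt; exact lt_irrefl _ hlt
    · apply hnxy
      have hadj : G0.Adj x y := by
        rw [hG0, sdiff_adj, fromEdgeSet_adj]
        exact ⟨hmem, fun hc => hexy hc.1⟩
      exact hadj.reachable
  have heT : s(a, b) ∈ ET := by rw [hET, Set.Finite.mem_toFinset]; exact hab
  have hHE : H.edgeSet = ↑(insert s(x, y) (ET.erase s(a, b))) := by
    rw [hH, edgeSet_sup, hG0, edgeSet_sdiff, edgeSet_fromEdgeSet, edgeSet_sdiff_sdiff_isDiag,
      edgeSet_fromEdgeSet]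
    ext e
    simp only [Set.mem_union, Set.mem_diff, Set.mem_singleton_iff, Set.mem_setOf_eq,
      Finset.coe_insert, Set.mem_insert_iff, Finset.coe_erase, Finset.mem_coe,
      Finset.mem_erase, hTE]
    constructor
    · rintro (⟨hmem, hne'⟩ | ⟨rfl, -⟩)
      · exact Or.inr ⟨hmem, hne'⟩
      · exact Or.inl rfl
    · rintro (rfl | ⟨hmem, hne'⟩)
      · exact Or.inr ⟨rfl, by simp [hne]⟩
      · exact Or.inl ⟨hmem, hne'⟩
  have hfHE : s(x, y) ∉ ET.erase s(a, b) := by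
    intro h
    exact hfxy (by rw [hTE]; exact Finset.mem_coe.mpr (Finset.erase_subset _ _ h))
  have h1 : glength T = ∑ e ∈ ET, edgeLen e := glength_eq_sum T ET hTE
  have h2 : glength H = ∑ e ∈ insert s(x, y) (ET.erase s(a, b)), edgeLen e :=
    glength_eq_sum H _ hHE
  rw [Finset.sum_insert hfHE] at h2
  have h3 : edgeLen s(a, b) + ∑ e ∈ ET.erase s(a, b), edgeLen e = ∑ e ∈ ET, edgeLen e :=
    Finset.add_sum_erase _ _ heT
  have hxy' : edgeLen s(x, y) = dist x y := rfl
  have hab' : edgeLen s(a, b) = dist a b := rfl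
  rw [h1, h2] at hlen
  rw [hxy'] at hlen
  rw [hab'] at h3
  linarith

/-- Every edge on a trail in an MST is at most as long as some edge on any
walk between the same endpoints in any spanning tree. -/
lemma mst_path_edge_le (V : Finset Pt) {T T' : SimpleGraph Pt}
    (hT : IsMSTOn ↑V T) (hT' : IsSpanningTreeOn ↑V T') {u v : Pt}
    (p : T.Walk u v) (hp : p.IsTrail) (q : T'.Walk u v) :
    ∀ e ∈ p.edges, ∃ f ∈ q.edges, edgeLen e ≤ edgeLen f := by
  intro e he
  obtain ⟨d, hd, rfl⟩ := List.mem_map.mp he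
  obtain ⟨hua, hbv⟩ := walk_dart_sides p hp d hd
  set a := d.toProd.1 with hadef
  set b := d.toProd.2 with hbdef
  have hab : T.Adj a b := d.adj
  have hedge : d.edge = s(a, b) := rfl
  rw [hedge] at hua hbv ⊢
  have hbridge : ¬(T \ fromEdgeSet {s(a, b)}).Reachable a b :=
    (isBridge_iff.mp (isAcyclic_iff_forall_adj_isBridge.mp hT.1.2.1 hab))
  set S : Set Pt := {z | (T \ fromEdgeSet {s(a, b)}).Reachable z a} with hS
  have hvS : v ∉ S := fun hvS => hbridge (hbv.trans hvS).symm
  obtain ⟨x, y, hmem, hadjxy, hxS, hyS⟩ := walk_cross q S hua hvS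
  have hx : x ∈ V := (hT'.1 hadjxy).1
  have hy : y ∈ V := (hT'.1 hadjxy).2
  have ha : a ∈ V := (hT.1.1 hab).1
  obtain ⟨py⟩ := hT.1.2.2 y hy a ha
  have hyb : (T \ fromEdgeSet {s(a, b)}).Reachable y b := by
    rcases reach_or a b py (Or.inl (Reachable.refl _)) with h | h
    · exact absurd h hyS
    · exact h
  refine ⟨s(x, y), hmem, ?_⟩
  have := mst_exchange V T hT hab hx hy hxS hyb
  simpa using this

lemma mst_max_le (V : Finset Pt) {T T' : SimpleGraph Pt}
    (hT : IsMSTOn ↑V T) (hT' : IsSpanningTreeOn ↑V T') {u v : Pt}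
    (p : T.Walk u v) (hp : p.IsTrail) (q : T'.Walk u v) :
    (p.edges.map edgeLen).maximum ≤ (q.edges.map edgeLen).maximum := by
  apply List.maximum_le_of_forall_le
  intro r hr
  obtain ⟨e, he, rfl⟩ := List.mem_map.mp hr
  obtain ⟨f, hf, hle⟩ := mst_path_edge_le V hT hT' p hp q e he
  exact le_trans (WithBot.coe_le_coe.mpr hle)
    (List.le_maximum_of_mem' (List.mem_map_of_mem (f := edgeLen) hf))

theorem stmt13 (V : Finset Pt) (T T' : SimpleGraph Pt)
    (hT : IsMSTOn ↑V T) (hT' : IsMSTOn ↑V T')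
    (u v : Pt) (hu : u ∈ V) (hv : v ∈ V) (huv : u ≠ v)
    (p : T.Walk u v) (hp : p.IsPath)
    (q : T'.Walk u v) (hq : q.IsPath) :
    (p.edges.map edgeLen).maximum = (q.edges.map edgeLen).maximum := by
  exact le_antisymm (mst_max_le V hT hT'.1 p hp.isTrail q)
    (mst_max_le V hT' hT.1 q hq.isTrail p)

end
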